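/- Let K be a subfield of ℂ that is a finite extension of ℚ. Let n ≥ 1 and p_0, …, p_n ∈ K[z] with p_n ≠ 0. Let T ∈ K[z] be a nonzero polynomial with all coefficients integral over ℤ, and let H₁ be the n×n matrix over K[z] with (H₁)_{i,i+1} = T for 0 ≤ i ≤ n−2, last row satisfying p_n·(H₁)_{n−1,j} = −T·p_j for 0 ≤ j ≤ n−1, and all other entries 0; assume all coefficients of all entries of H₁ are integral over ℤ. Define H_{s+1} = H_s·H₁ + T·H_s' − s·T'·H_s and assume the Galochkin condition in the large sense: for every ε > 0 there exists s₀ such that for every s ≥ s₀ there is a positive integer q ≤ (s!)^ε such that for all 1 ≤ m ≤ s, every coefficient of every entry of (q/m!)·H_m is integral over ℤ. Let α ∈ K with p_n(α) ≠ 0. Then there exist formal power series f_1, …, f_n ∈ K⟦z⟧, linearly independent over K, such that each f_i is a G-function in the large sense and each satisfies ∑_{k=0}^n (p_k composed with X + C(α))·f_i^{(k)} = 0 (formal derivatives). -/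

import Mathlib

set_option linter.unusedSectionVars false
set_option maxHeartbeats 1000000
set_option synthInstance.maxHeartbeats 400000
set_option linter.unusedVariables false

open Polynomial PowerSeries Finset

noncomputable section

/-- `f ∈ K⟦z⟧` is a G-function in the large sense. -/
def IsGFunctionLarge (K : Subfield ℂ) (f : PowerSeries K) : Prop :=
  (∃ (m : ℕ) (q : ℕ → Polynomial K), (∃ j ≤ m, q j ≠ 0) ∧
      ∑ j ∈ Finset.range (m + 1),
        (q j : PowerSeries K) * (PowerSeries.derivativeFun^[j] f) = 0) ∧
  (∀ ε : ℝ, 0 < ε → ∃ N : ℕ, ∀ k ≥ N, ∀ σ : K →+* ℂ,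
      ‖σ (PowerSeries.coeff k f)‖ ≤ (k.factorial : ℝ) ^ ε) ∧
  (∀ ε : ℝ, 0 < ε → ∃ N : ℕ, ∀ k ≥ N, ∃ d : ℕ, 0 < d ∧ (d : ℝ) ≤ (k.factorial : ℝ) ^ ε ∧
      ∀ j ≤ k, IsIntegral ℤ ((d : K) * PowerSeries.coeff j f))

namespace GAux

variable {K : Subfield ℂ} [FiniteDimensional ℚ K]






lemma exists_bound (x : K) : ∃ B : ℝ, ∀ σ : K →+* ℂ, ‖σ x‖ ≤ B := by
  haveI : NumberField K := ⟨⟩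
  obtain ⟨B, hB⟩ := (Set.finite_range (fun σ : K →+* ℂ => ‖σ x‖)).bddAbove
  exact ⟨B, fun σ => hB (Set.mem_range_self σ)⟩

lemma isIntegral_natCast (m : ℕ) : IsIntegral ℤ (m : K) := by
  have := isIntegral_algebraMap (R := ℤ) (A := K) (x := (m : ℤ))
  simpa using this

lemma exists_den (x : K) : ∃ c : ℕ, 0 < c ∧ IsIntegral ℤ ((c : K) * x) := by
  haveI : NumberField K := ⟨⟩
  have halg : IsAlgebraic ℤ x := by
    have h1 : IsAlgebraic ℚ x := Algebra.IsAlgebraic.isAlgebraic x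
    exact (IsFractionRing.isAlgebraic_iff ℤ ℚ K).mpr h1
  obtain ⟨d, hd, hy'⟩ := IsAlgebraic.exists_integral_multiple halg
  have hy : IsIntegral ℤ ((d : K) * x) := by
    simpa [zsmul_eq_mul] using hy'
  refine ⟨d.natAbs, Int.natAbs_pos.mpr hd, ?_⟩
  have habs : ((d.natAbs : K)) * x = (((d.natAbs : ℤ) : K)) * x := by
    rw [Int.cast_natCast]
  rw [habs]
  rcases Int.natAbs_eq d with h | h
  · rw [← h]; exact hy
  · have h2 : ((d.natAbs : ℤ) : K) = -((d : ℤ) : K) := by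
      rw [show (d.natAbs : ℤ) = -d by omega]; push_cast; ring
    rw [h2, neg_mul]
    exact hy.neg

lemma exists_den_poly (u : Polynomial K) :
    ∃ c : ℕ, 0 < c ∧ ∀ k, IsIntegral ℤ ((c : K) * u.coeff k) := by
  choose c hc hint using fun k => exists_den (K := K) (u.coeff k)
  refine ⟨∏ k ∈ range (u.natDegree + 1), c k, Finset.prod_pos (fun k _ => hc k), fun k => ?_⟩
  by_cases hk : k ≤ u.natDegree
  · have hmem : k ∈ range (u.natDegree + 1) := by simpa using Nat.lt_succ_of_le hk
    rw [← Finset.mul_prod_erase _ _ hmem, Nat.cast_mul, mul_comm ((c k : K)) _, mul_assoc]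
    exact (isIntegral_natCast _).mul (hint k)
  · rw [u.coeff_eq_zero_of_natDegree_lt (by omega), mul_zero]
    exact isIntegral_zero

lemma int_coeff_mul {u v : Polynomial K} {c d : K}
    (hu : ∀ k, IsIntegral ℤ (c * u.coeff k)) (hv : ∀ k, IsIntegral ℤ (d * v.coeff k)) (k : ℕ) :
    IsIntegral ℤ (c * d * (u * v).coeff k) := by
  rw [Polynomial.coeff_mul, Finset.mul_sum]
  refine IsIntegral.sum _ (fun x _ => ?_)
  have h : c * d * (u.coeff x.1 * v.coeff x.2) = (c * u.coeff x.1) * (d * v.coeff x.2) := by ring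
  rw [h]; exact (hu _).mul (hv _)

lemma int_coeff_pow {u : Polynomial K} {c : K} (hu : ∀ k, IsIntegral ℤ (c * u.coeff k)) :
    ∀ m k, IsIntegral ℤ (c ^ m * (u ^ m).coeff k)
  | 0, k => by
      simp only [pow_zero, Polynomial.coeff_one, one_mul]
      split
      · exact isIntegral_one
      · exact isIntegral_zero
  | (m+1), k => by
      rw [pow_succ, pow_succ]
      exact int_coeff_mul (fun k => int_coeff_pow hu m k) hu k

lemma int_coeff_taylor {u : Polynomial K} {c : K} {α : K} {e : ℕ}
    (he : IsIntegral ℤ ((e : K) * α))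
    (hu : ∀ k, IsIntegral ℤ (c * u.coeff k)) {L : ℕ} (hL : u.natDegree ≤ L) (k : ℕ) :
    IsIntegral ℤ (c * (e : K) ^ L * (u.comp (Polynomial.X + Polynomial.C α)).coeff k) := by
  rw [← Polynomial.taylor_apply, Polynomial.taylor_coeff]
  rw [Polynomial.eval_eq_sum_range' (n := L + 1)
    (lt_of_le_of_lt (le_trans (Polynomial.natDegree_hasseDeriv_le u k)
      (le_trans (Nat.sub_le _ _) hL)) (Nat.lt_succ_self L)) α]
  rw [Finset.mul_sum]
  refine IsIntegral.sum _ (fun l hl => ?_)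
  rw [Polynomial.hasseDeriv_coeff]
  have hlL : l ≤ L := by
    have := Finset.mem_range.mp hl; omega
  have key : c * (e:K)^L * ((((l + k).choose k : ℕ) : K) * u.coeff (l + k) * α ^ l)
      = (((l+k).choose k : ℕ) : K) * (e:K)^(L - l) * ((c * u.coeff (l+k)) * (((e:K)) * α)^l) := by
    rw [mul_pow]
    have h2 : (e:K)^L = (e:K)^(L-l) * (e:K)^l := by rw [← pow_add]; congr 1; omega
    rw [h2]; ring
  rw [key]
  exact (((isIntegral_natCast _).mul ((isIntegral_natCast (K := K) e).pow _)).mul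
    ((hu _).mul (he.pow l)))

lemma desc_le_desc {b m k n : ℕ} (hb : b ≤ m) (hk : k ≤ n) :
    (b + k).descFactorial k ≤ (m + n).descFactorial n := by
  have h1 : (b + k).descFactorial k ≤ (m + k).descFactorial k :=
    Nat.descFactorial_le k (by omega)
  refine le_trans h1 ?_
  induction n, hk using Nat.le_induction with
  | base => exact le_refl _
  | succ n hn ih =>
      have h2 : (m + (n+1)).descFactorial (n+1) = (m + n + 1) * (m + n).descFactorial n := by
        rw [show m + (n+1) = (m+n) + 1 from rfl]
        exact Nat.succ_descFactorial_succ (m+n) n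
      rw [h2]
      exact le_trans ih (Nat.le_mul_of_pos_left _ (by omega))







lemma pow_le_factorial_rpow {C : ℝ} (hC : 1 ≤ C) {ε : ℝ} (hε : 0 < ε) :
    ∃ N : ℕ, ∀ k ≥ N, C ^ k ≤ (k.factorial : ℝ) ^ ε := by
  set x := (C ^ (2:ℕ)) ^ (1/ε) with hx
  have hx0 : 0 ≤ x := Real.rpow_nonneg (by positivity) _
  set M := ⌈x⌉₊ + 1 with hM
  have hxM : x ≤ (M : ℝ) := le_trans (Nat.le_ceil x) (by exact_mod_cast Nat.le_succ _)
  have hM2 : C ^ (2:ℕ) ≤ (M : ℝ) ^ ε := by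
    calc C ^ (2:ℕ) = ((C ^ (2:ℕ)) ^ (1/ε)) ^ ε := by
          rw [← Real.rpow_natCast C 2, ← Real.rpow_mul (by positivity), ← Real.rpow_mul (by positivity)]
          congr 1
          field_simp
      _ ≤ (M : ℝ) ^ ε := Real.rpow_le_rpow hx0 hxM hε.le
  have hfact : ∀ k, M ≤ k → ((M:ℝ)) ^ (k - M) ≤ (k.factorial : ℝ) := by
    intro k hk
    induction k, hk using Nat.le_induction with
    | base =>
        simp only [Nat.sub_self, pow_zero]
        exact_mod_cast Nat.one_le_iff_ne_zero.mpr (Nat.factorial_pos M).ne'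
    | succ k hk ih =>
        have h1 : k + 1 - M = (k - M) + 1 := by omega
        rw [h1, pow_succ, Nat.factorial_succ, Nat.cast_mul]
        have hMk : (M : ℝ) ≤ ((k+1 : ℕ) : ℝ) := by exact_mod_cast Nat.le_succ_of_le hk
        calc (M:ℝ) ^ (k - M) * M ≤ (k.factorial : ℝ) * ((k+1 : ℕ) : ℝ) :=
              mul_le_mul ih hMk (by positivity) (by positivity)
          _ = ((k+1:ℕ) : ℝ) * (k.factorial : ℝ) := by ring
  refine ⟨2 * M, fun k hk => ?_⟩
  calc C ^ k ≤ C ^ (2 * (k - M)) := pow_le_pow_right₀ hC (by omega)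
    _ = (C ^ (2:ℕ)) ^ (k - M) := by rw [← pow_mul]
    _ ≤ ((M:ℝ) ^ ε) ^ (k - M) := pow_le_pow_left₀ (by positivity) hM2 _
    _ = ((M:ℝ) ^ ((k - M : ℕ)) : ℝ) ^ ε := by
        rw [← Real.rpow_natCast ((M:ℝ) ^ ε) (k - M), ← Real.rpow_mul (by positivity),
          mul_comm ε, Real.rpow_mul (by positivity), Real.rpow_natCast]
    _ ≤ (k.factorial : ℝ) ^ ε := Real.rpow_le_rpow (by positivity) (hfact k (by omega)) hε.le

lemma coeff_iter_deriv (f : PowerSeries K) (m k : ℕ) :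
    (PowerSeries.coeff k) (PowerSeries.derivativeFun^[m] f)
      = ((k + m).descFactorial m : K) * PowerSeries.coeff (k + m) f := by
  induction m generalizing f with
  | zero => simp
  | succ m ih =>
      rw [Function.iterate_succ_apply, ih (PowerSeries.derivativeFun f),
        show PowerSeries.derivativeFun f = PowerSeries.derivative _ f from rfl,
        PowerSeries.coeff_derivative]
      rw [show k + (m + 1) = (k + m) + 1 from rfl, Nat.succ_descFactorial_succ]
      push_cast; ring

lemma coeff_coe_mul (u : Polynomial K) (g : PowerSeries K) (m : ℕ) :
    PowerSeries.coeff m ((u : PowerSeries K) * g)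
      = ∑ l ∈ range (m + 1), u.coeff l * PowerSeries.coeff (m - l) g := by
  rw [PowerSeries.coeff_mul, Finset.Nat.sum_antidiagonal_eq_sum_range_succ_mk]
  exact Finset.sum_congr rfl fun l _ => by rw [Polynomial.coeff_coe]

lemma coeff_mul_range (u v : Polynomial K) (m : ℕ) :
    (u * v).coeff m = ∑ l ∈ range (m + 1), u.coeff l * v.coeff (m - l) := by
  rw [Polynomial.coeff_mul, Finset.Nat.sum_antidiagonal_eq_sum_range_succ_mk]







/-- The ring hom `u ↦ (u.comp (X + C α) : K⟦z⟧)`. -/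
def Phi (α : K) : Polynomial K →+* PowerSeries K :=
  (Polynomial.coeToPowerSeries.ringHom).comp (Polynomial.aeval (Polynomial.X + Polynomial.C α)).toRingHom

lemma Phi_apply (α : K) (u : Polynomial K) :
    Phi α u = ((u.comp (Polynomial.X + Polynomial.C α) : Polynomial K) : PowerSeries K) := by
  rw [Phi, RingHom.comp_apply, Polynomial.comp_eq_aeval]
  rfl

lemma Phi_deriv (α : K) (u : Polynomial K) :
    PowerSeries.derivativeFun (Phi α u) = Phi α (Polynomial.derivative u) := by
  rw [Phi_apply, Phi_apply]
  change PowerSeries.derivative _ _ = _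
  rw [PowerSeries.derivative_coe, Polynomial.derivative_comp]
  simp

lemma Phi_constantCoeff (α : K) (u : Polynomial K) :
    PowerSeries.constantCoeff (Phi α u) = u.eval α := by
  rw [Phi_apply, Polynomial.constantCoeff_coe, ← Polynomial.taylor_apply,
    Polynomial.taylor_coeff_zero]

section Seq

variable (n : ℕ) (p : ℕ → Polynomial K) (α : K)

def Pp (k : ℕ) : Polynomial K := (p k).comp (Polynomial.X + Polynomial.C α)

def gg : K := (p n).eval α

lemma Pp_coeff_zero : (Pp p α n).coeff 0 = gg n p α := by
  rw [Pp, gg, Polynomial.coeff_zero_eq_eval_zero, Polynomial.eval_comp]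
  simp

/-- The recursion formula for the coefficients of a power series solution. -/
def phi (w : ℕ → K) (m : ℕ) : K :=
  -(gg n p α * (((m+n).descFactorial n : ℕ) : K))⁻¹ *
    ∑ k ∈ range (n+1), ∑ l ∈ range (m+1),
      (if k = n ∧ l = 0 then 0
       else (Pp p α k).coeff l * (((m - l + k).descFactorial k : ℕ) : K) * w (m - l + k))

def seqa (i₀ : ℕ) : ℕ → ℕ → K
  | 0 => fun j => if j < n ∧ j = i₀ then 1 else 0
  | (m+1) => fun j => if j = n + m then phi n p α (seqa i₀ m) m else seqa i₀ m j

/-- The coefficient sequence of the solution with initial data `e_{i₀}`. -/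
def aseq (i₀ : ℕ) (j : ℕ) : K := seqa n p α i₀ (j+1) j

lemma seqa_stable (i₀ : ℕ) : ∀ m m' j, m ≤ m' → j < n + m →
    seqa n p α i₀ m' j = seqa n p α i₀ m j := by
  intro m m' j h hj
  induction m', h using Nat.le_induction with
  | base => rfl
  | succ m' hm ih =>
      have h2 : seqa n p α i₀ (m' + 1) j = seqa n p α i₀ m' j := by
        simp only [seqa]
        exact if_neg (by omega)
      rw [h2, ih]

lemma seqa_eq_aseq (i₀ m j : ℕ) (hj : j < n + m) :
    seqa n p α i₀ m j = aseq n p α i₀ j := by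
  rw [aseq]
  rcases le_total (j+1) m with h | h
  · rw [seqa_stable n p α i₀ (j+1) m j h (by omega)]
  · rw [seqa_stable n p α i₀ m (j+1) j h hj]

lemma aseq_lt (i₀ j : ℕ) (hj : j < n) : aseq n p α i₀ j = if j = i₀ then 1 else 0 := by
  rw [aseq, seqa_stable n p α i₀ 0 (j+1) j (Nat.zero_le _) (by omega)]
  simp only [seqa]
  by_cases h : j = i₀
  · rw [if_pos ⟨hj, h⟩, if_pos h]
  · rw [if_neg (by tauto), if_neg h]

lemma phi_congr (w w' : ℕ → K) (m : ℕ) (h : ∀ j, j < n + m → w j = w' j) :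
    phi n p α w m = phi n p α w' m := by
  rw [phi, phi]
  congr 1
  refine Finset.sum_congr rfl (fun k hk => Finset.sum_congr rfl (fun l hl => ?_))
  by_cases hc : k = n ∧ l = 0
  · rw [if_pos hc, if_pos hc]
  · rw [if_neg hc, if_neg hc, h (m - l + k) ?_]
    have hk' : k ≤ n := by simpa [Nat.lt_succ_iff] using hk
    have hl' : l ≤ m := by simpa [Nat.lt_succ_iff] using hl
    rcases Nat.eq_or_lt_of_le hk' with h1 | h1
    · have : l ≠ 0 := fun h0 => hc ⟨h1, h0⟩
      omega
    · omega

lemma aseq_rec (i₀ m : ℕ) : aseq n p α i₀ (n + m) = phi n p α (aseq n p α i₀) m := by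
  rw [aseq, seqa_stable n p α i₀ (m+1) (n+m+1) (n+m) (by omega) (by omega)]
  simp only [seqa]
  rw [if_pos trivial]
  exact phi_congr n p α _ _ m (fun j hj => seqa_eq_aseq n p α i₀ m j hj)

lemma aseq_ode (hgg : gg n p α ≠ 0) (i₀ m : ℕ) :
    ∑ k ∈ range (n+1), ∑ l ∈ range (m+1),
      (Pp p α k).coeff l * (((m - l + k).descFactorial k : ℕ) : K)
        * aseq n p α i₀ (m - l + k) = 0 := by
  have hrec := aseq_rec n p α i₀ m
  rw [phi] at hrec
  have hsplit : ∑ k ∈ range (n+1), ∑ l ∈ range (m+1),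
      (Pp p α k).coeff l * (((m - l + k).descFactorial k : ℕ) : K)
        * aseq n p α i₀ (m - l + k)
      = (Pp p α n).coeff 0 * (((m - 0 + n).descFactorial n : ℕ) : K) * aseq n p α i₀ (m - 0 + n)
        + ∑ k ∈ range (n+1), ∑ l ∈ range (m+1),
          (if k = n ∧ l = 0 then 0
           else (Pp p α k).coeff l * (((m - l + k).descFactorial k : ℕ) : K)
             * aseq n p α i₀ (m - l + k)) := by
    calc ∑ k ∈ range (n+1), ∑ l ∈ range (m+1),
        (Pp p α k).coeff l * (((m - l + k).descFactorial k : ℕ) : K)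
          * aseq n p α i₀ (m - l + k)
        = ∑ k ∈ range (n+1), ∑ l ∈ range (m+1),
            ((if k = n ∧ l = 0 then (Pp p α k).coeff l * (((m - l + k).descFactorial k : ℕ) : K)
                * aseq n p α i₀ (m - l + k) else 0)
             + (if k = n ∧ l = 0 then 0
                else (Pp p α k).coeff l * (((m - l + k).descFactorial k : ℕ) : K)
                  * aseq n p α i₀ (m - l + k))) := by
          refine Finset.sum_congr rfl (fun k _ => Finset.sum_congr rfl (fun l _ => ?_))
          by_cases hc : k = n ∧ l = 0
          · rw [if_pos hc, if_pos hc, add_zero]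
          · rw [if_neg hc, if_neg hc, zero_add]
      _ = (∑ k ∈ range (n+1), ∑ l ∈ range (m+1),
            (if k = n ∧ l = 0 then (Pp p α k).coeff l * (((m - l + k).descFactorial k : ℕ) : K)
              * aseq n p α i₀ (m - l + k) else 0))
          + ∑ k ∈ range (n+1), ∑ l ∈ range (m+1),
            (if k = n ∧ l = 0 then 0
             else (Pp p α k).coeff l * (((m - l + k).descFactorial k : ℕ) : K)
               * aseq n p α i₀ (m - l + k)) := by
          rw [← Finset.sum_add_distrib]
          refine Finset.sum_congr rfl (fun k _ => ?_)
          rw [← Finset.sum_add_distrib]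
      _ = _ := by
          congr 1
          rw [Finset.sum_eq_single n]
          · rw [Finset.sum_eq_single 0]
            · rw [if_pos ⟨rfl, rfl⟩]
            · intro l _ hl; rw [if_neg (by tauto)]
            · intro h0; exact absurd (Finset.mem_range.mpr (by omega)) h0
          · intro k _ hk
            exact Finset.sum_eq_zero (fun l _ => by rw [if_neg (by tauto)])
          · intro hn0; exact absurd (Finset.mem_range.mpr (by omega)) hn0
  rw [show n + m = m + n from Nat.add_comm n m] at hrec
  rw [hsplit, Pp_coeff_zero, show m - 0 + n = m + n by omega, hrec]
  have hdesc : (((m+n).descFactorial n : ℕ) : K) ≠ 0 := by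
    have hpos : 0 < (m+n).descFactorial n :=
      Nat.pos_of_ne_zero (fun h => by
        rw [Nat.descFactorial_eq_zero_iff_lt] at h; omega)
    exact_mod_cast hpos.ne'
  field_simp
  ring

end Seq


section Mat

variable (n : ℕ) (p : ℕ → Polynomial K) (α : K)

def HhOne : Matrix (Fin n) (Fin n) (Polynomial K) :=
  fun i j => if (j : ℕ) = (i : ℕ) + 1 then (p n)^2
    else if (i : ℕ) = n - 1 then -(p n * p (j : ℕ)) else 0

def Hh : ℕ → Matrix (Fin n) (Fin n) (Polynomial K)
  | 0 => 1
  | (s+1) => Hh s * HhOne n p + ((p n)^2) • (Hh s).map Polynomial.derivative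
      - (((s : ℕ) : Polynomial K) * Polynomial.derivative ((p n)^2)) • Hh s

lemma derivativeFun_sum {ι : Type*} (s : Finset ι) (g : ι → PowerSeries K) :
    PowerSeries.derivativeFun (∑ i ∈ s, g i) = ∑ i ∈ s, PowerSeries.derivativeFun (g i) :=
  map_sum ((PowerSeries.derivative (R := K)).toLinearMap) g s

lemma poly_pow_deriv (v : Polynomial K) (s : ℕ) :
    v * Polynomial.derivative (v ^ s)
      = ((s : ℕ) : Polynomial K) * Polynomial.derivative v * v ^ s := by
  cases s with
  | zero => simp
  | succ s =>
      rw [Polynomial.derivative_pow, Nat.succ_sub_one, Polynomial.C_eq_natCast]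
      push_cast
      ring

lemma ode_holds (hgg : gg n p α ≠ 0) (i₀ : ℕ) :
    ∑ k ∈ range (n+1), Phi α (p k)
      * (PowerSeries.derivativeFun^[k] (PowerSeries.mk (aseq n p α i₀))) = 0 := by
  apply PowerSeries.ext; intro m
  rw [map_sum, map_zero]
  have h1 : ∀ k ∈ range (n+1),
      PowerSeries.coeff m (Phi α (p k)
        * (PowerSeries.derivativeFun^[k] (PowerSeries.mk (aseq n p α i₀))))
      = ∑ l ∈ range (m+1), (Pp p α k).coeff l
          * ((((m - l + k).descFactorial k : ℕ) : K) * aseq n p α i₀ (m - l + k)) := by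
    intro k _
    rw [Phi_apply, coeff_coe_mul]
    refine Finset.sum_congr rfl (fun l _ => ?_)
    rw [coeff_iter_deriv, PowerSeries.coeff_mk]
    rfl
  rw [Finset.sum_congr rfl h1]
  have h2 := aseq_ode n p α hgg i₀ m
  rw [← h2]
  exact Finset.sum_congr rfl (fun k _ => Finset.sum_congr rfl (fun l _ => by ring))

lemma rowrel (hgg : gg n p α ≠ 0) (hn : 1 ≤ n) (i₀ : ℕ) (j : Fin n) :
    Phi α ((p n)^2)
        * (PowerSeries.derivativeFun^[(j : ℕ)+1] (PowerSeries.mk (aseq n p α i₀)))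
      = ∑ k : Fin n, Phi α (HhOne n p j k)
          * (PowerSeries.derivativeFun^[(k : ℕ)] (PowerSeries.mk (aseq n p α i₀))) := by
  by_cases hj : (j : ℕ) = n - 1
  · have hode := ode_holds n p α hgg i₀
    rw [Finset.sum_range_succ] at hode
    have hsum : ∑ k : Fin n, Phi α (HhOne n p j k)
        * (PowerSeries.derivativeFun^[(k : ℕ)] (PowerSeries.mk (aseq n p α i₀)))
        = -(Phi α (p n) * ∑ k ∈ range n, Phi α (p k)
            * (PowerSeries.derivativeFun^[k] (PowerSeries.mk (aseq n p α i₀)))) := by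
      rw [← Fin.sum_univ_eq_sum_range (fun k => Phi α (p k)
        * (PowerSeries.derivativeFun^[k] (PowerSeries.mk (aseq n p α i₀)))) n,
        Finset.mul_sum, ← Finset.sum_neg_distrib]
      refine Finset.sum_congr rfl (fun k _ => ?_)
      have hk := k.isLt
      rw [HhOne]
      rw [if_neg (by omega), if_pos hj, map_neg, map_mul]
      ring
    rw [hsum]
    have h3 : ∑ k ∈ range n, Phi α (p k)
        * (PowerSeries.derivativeFun^[k] (PowerSeries.mk (aseq n p α i₀)))
        = -(Phi α (p n) * (PowerSeries.derivativeFun^[n] (PowerSeries.mk (aseq n p α i₀)))) :=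
      eq_neg_of_add_eq_zero_left hode
    rw [h3, show (j : ℕ) + 1 = n by omega, map_pow]
    ring
  · have hjlt : (j : ℕ) + 1 < n := by have := j.isLt; omega
    rw [Finset.sum_eq_single (⟨(j : ℕ) + 1, hjlt⟩ : Fin n)]
    · rw [HhOne]
      simp
    · intro k _ hk
      rw [HhOne]
      rw [if_neg (fun h => hk (Fin.ext h)), if_neg hj, map_zero, zero_mul]
    · intro h; exact absurd (Finset.mem_univ _) h

lemma claim_eq (hgg : gg n p α ≠ 0) (hn : 1 ≤ n) (i₀ : ℕ) :
    ∀ s : ℕ, ∀ i : Fin n,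
      (Phi α ((p n)^2))^s
          * (PowerSeries.derivativeFun^[s + (i : ℕ)] (PowerSeries.mk (aseq n p α i₀)))
        = ∑ j : Fin n, Phi α (Hh n p s i j)
            * (PowerSeries.derivativeFun^[(j : ℕ)] (PowerSeries.mk (aseq n p α i₀))) := by
  set f := PowerSeries.mk (aseq n p α i₀) with hf
  intro s
  induction s with
  | zero =>
      intro i
      simp only [pow_zero, one_mul, zero_add]
      rw [Finset.sum_eq_single i]
      · rw [show Hh n p 0 i i = 1 from Matrix.one_apply_eq i, map_one, one_mul]
      · intro k _ hk
        rw [show Hh n p 0 i k = 0 from Matrix.one_apply_ne' hk, map_zero, zero_mul]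
      · intro h; exact absurd (Finset.mem_univ _) h
  | succ s ih =>
      intro i
      have hD := congrArg PowerSeries.derivativeFun (ih i)
      rw [PowerSeries.derivativeFun_mul, smul_eq_mul, smul_eq_mul, derivativeFun_sum] at hD
      rw [← Function.iterate_succ_apply' PowerSeries.derivativeFun (s + (i:ℕ)) f] at hD
      have hD2 : ∑ j : Fin n, PowerSeries.derivativeFun
          (Phi α (Hh n p s i j) * PowerSeries.derivativeFun^[(j : ℕ)] f)
          = ∑ j : Fin n, (Phi α (Hh n p s i j) * PowerSeries.derivativeFun^[(j : ℕ) + 1] f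
              + Phi α (Polynomial.derivative (Hh n p s i j))
                * PowerSeries.derivativeFun^[(j : ℕ)] f) := by
        refine Finset.sum_congr rfl (fun j _ => ?_)
        rw [PowerSeries.derivativeFun_mul, Phi_deriv, smul_eq_mul, smul_eq_mul,
          ← Function.iterate_succ_apply' PowerSeries.derivativeFun (j : ℕ) f]
        ring
      rw [hD2] at hD
      have hQ : Phi α ((p n)^2) * ((Phi α ((p n)^2))^s
            * PowerSeries.derivativeFun^[s + (i:ℕ) + 1] f)
          + Phi α ((p n)^2) * (PowerSeries.derivativeFun^[s + (i:ℕ)] f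
              * PowerSeries.derivativeFun ((Phi α ((p n)^2))^s))
          = Phi α ((p n)^2) * ∑ j : Fin n, (Phi α (Hh n p s i j)
              * PowerSeries.derivativeFun^[(j : ℕ) + 1] f
              + Phi α (Polynomial.derivative (Hh n p s i j))
                * PowerSeries.derivativeFun^[(j : ℕ)] f) := by
        rw [← mul_add, hD]
      have hQpow : Phi α ((p n)^2) * PowerSeries.derivativeFun ((Phi α ((p n)^2))^s)
          = Phi α (((s : ℕ) : Polynomial K) * Polynomial.derivative ((p n)^2))
            * (Phi α ((p n)^2))^s := by
        calc Phi α ((p n)^2) * PowerSeries.derivativeFun ((Phi α ((p n)^2))^s)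
            = Phi α ((p n)^2) * PowerSeries.derivativeFun (Phi α (((p n)^2)^s)) :=
              congrArg (fun x => Phi α ((p n)^2) * PowerSeries.derivativeFun x)
                (map_pow (Phi α) ((p n)^2) s).symm
          _ = Phi α ((p n)^2) * Phi α (Polynomial.derivative (((p n)^2)^s)) := by
              rw [Phi_deriv]
          _ = Phi α ((p n)^2 * Polynomial.derivative (((p n)^2)^s)) :=
              ((Phi α).map_mul _ _).symm
          _ = Phi α (((s : ℕ) : Polynomial K) * Polynomial.derivative ((p n)^2)
                * ((p n)^2)^s) := by rw [poly_pow_deriv]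
          _ = Phi α (((s : ℕ) : Polynomial K) * Polynomial.derivative ((p n)^2))
                * Phi α (((p n)^2)^s) := (Phi α).map_mul _ _
          _ = Phi α (((s : ℕ) : Polynomial K) * Polynomial.derivative ((p n)^2))
                * (Phi α ((p n)^2))^s :=
              congrArg (fun x => Phi α (((s : ℕ) : Polynomial K)
                * Polynomial.derivative ((p n)^2)) * x) (map_pow (Phi α) ((p n)^2) s)
      have hB : Phi α ((p n)^2) * (PowerSeries.derivativeFun^[s + (i:ℕ)] f
            * PowerSeries.derivativeFun ((Phi α ((p n)^2))^s))
          = ∑ j : Fin n, Phi α ((((s : ℕ) : Polynomial K) * Polynomial.derivative ((p n)^2))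
              * Hh n p s i j) * PowerSeries.derivativeFun^[(j : ℕ)] f := by
        calc Phi α ((p n)^2) * (PowerSeries.derivativeFun^[s + (i:ℕ)] f
              * PowerSeries.derivativeFun ((Phi α ((p n)^2))^s))
            = (Phi α ((p n)^2) * PowerSeries.derivativeFun ((Phi α ((p n)^2))^s))
              * PowerSeries.derivativeFun^[s + (i:ℕ)] f := by ring
          _ = Phi α (((s : ℕ) : Polynomial K) * Polynomial.derivative ((p n)^2))
              * ((Phi α ((p n)^2))^s * PowerSeries.derivativeFun^[s + (i:ℕ)] f) := by
              rw [hQpow]; ring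
          _ = Phi α (((s : ℕ) : Polynomial K) * Polynomial.derivative ((p n)^2))
              * ∑ j : Fin n, Phi α (Hh n p s i j)
                  * PowerSeries.derivativeFun^[(j : ℕ)] f := by rw [ih i]
          _ = _ := by
              rw [Finset.mul_sum]
              refine Finset.sum_congr rfl (fun j _ => ?_)
              simp only [map_mul]
              ring
      have hR : Phi α ((p n)^2) * ∑ j : Fin n, (Phi α (Hh n p s i j)
            * PowerSeries.derivativeFun^[(j : ℕ) + 1] f
            + Phi α (Polynomial.derivative (Hh n p s i j))
              * PowerSeries.derivativeFun^[(j : ℕ)] f)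
          = (∑ k : Fin n, Phi α ((Hh n p s * HhOne n p) i k)
              * PowerSeries.derivativeFun^[(k : ℕ)] f)
            + ∑ j : Fin n, Phi α ((p n)^2 * Polynomial.derivative (Hh n p s i j))
                * PowerSeries.derivativeFun^[(j : ℕ)] f := by
        rw [Finset.mul_sum]
        have h1 : ∀ j : Fin n, Phi α ((p n)^2) * (Phi α (Hh n p s i j)
              * PowerSeries.derivativeFun^[(j : ℕ) + 1] f
              + Phi α (Polynomial.derivative (Hh n p s i j))
                * PowerSeries.derivativeFun^[(j : ℕ)] f)
            = (∑ k : Fin n, Phi α (Hh n p s i j * HhOne n p j k)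
                * PowerSeries.derivativeFun^[(k : ℕ)] f)
              + Phi α ((p n)^2 * Polynomial.derivative (Hh n p s i j))
                * PowerSeries.derivativeFun^[(j : ℕ)] f := by
          intro j
          rw [mul_add]
          congr 1
          · calc Phi α ((p n)^2) * (Phi α (Hh n p s i j)
                  * PowerSeries.derivativeFun^[(j : ℕ) + 1] f)
                = Phi α (Hh n p s i j) * (Phi α ((p n)^2)
                    * PowerSeries.derivativeFun^[(j : ℕ) + 1] f) := by ring
              _ = Phi α (Hh n p s i j) * ∑ k : Fin n, Phi α (HhOne n p j k)
                  * PowerSeries.derivativeFun^[(k : ℕ)] f := by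
                  rw [rowrel n p α hgg hn i₀ j]
              _ = _ := by
                  rw [Finset.mul_sum]
                  refine Finset.sum_congr rfl (fun k _ => ?_)
                  rw [map_mul]; ring
          · simp only [map_mul]; ring
        rw [Finset.sum_congr rfl (fun j _ => h1 j), Finset.sum_add_distrib]
        congr 1
        rw [Finset.sum_comm]
        refine Finset.sum_congr rfl (fun k _ => ?_)
        rw [Matrix.mul_apply, map_sum, Finset.sum_mul]
      have hfinal : (Phi α ((p n)^2))^(s+1)
            * PowerSeries.derivativeFun^[(s+1) + (i:ℕ)] f
          = (∑ k : Fin n, Phi α ((Hh n p s * HhOne n p) i k)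
              * PowerSeries.derivativeFun^[(k:ℕ)] f)
            + ((∑ j : Fin n, Phi α ((p n)^2 * Polynomial.derivative (Hh n p s i j))
                * PowerSeries.derivativeFun^[(j:ℕ)] f)
            - ∑ j : Fin n, Phi α ((((s : ℕ) : Polynomial K)
                * Polynomial.derivative ((p n)^2))
                * Hh n p s i j) * PowerSeries.derivativeFun^[(j:ℕ)] f) := by
        rw [show (s+1) + (i:ℕ) = s + (i:ℕ) + 1 by omega, pow_succ]
        linear_combination hQ + hR - hB
      rw [hfinal, ← Finset.sum_sub_distrib, ← Finset.sum_add_distrib]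
      refine Finset.sum_congr rfl (fun k _ => ?_)
      have hH : Hh n p (s+1) i k = (Hh n p s * HhOne n p) i k
          + (p n)^2 * Polynomial.derivative (Hh n p s i k)
          - (((s : ℕ) : Polynomial K) * Polynomial.derivative ((p n)^2)) * Hh n p s i k := by
        show (Hh n p s * HhOne n p + ((p n)^2) • (Hh n p s).map Polynomial.derivative
          - (((s : ℕ) : Polynomial K) * Polynomial.derivative ((p n)^2)) • Hh n p s) i k = _
        rw [Matrix.sub_apply, Matrix.add_apply, Matrix.smul_apply, Matrix.smul_apply,
          Matrix.map_apply, smul_eq_mul, smul_eq_mul]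
      rw [hH, map_sub, map_add]
      ring

lemma Hh_succ_apply (s : ℕ) (i k : Fin n) : Hh n p (s+1) i k
    = (Hh n p s * HhOne n p) i k + (p n)^2 * Polynomial.derivative (Hh n p s i k)
      - (((s : ℕ) : Polynomial K) * Polynomial.derivative ((p n)^2)) * Hh n p s i k := by
  show (Hh n p s * HhOne n p + ((p n)^2) • (Hh n p s).map Polynomial.derivative
    - (((s : ℕ) : Polynomial K) * Polynomial.derivative ((p n)^2)) • Hh n p s) i k = _
  rw [Matrix.sub_apply, Matrix.add_apply, Matrix.smul_apply, Matrix.smul_apply,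
    Matrix.map_apply, smul_eq_mul, smul_eq_mul]

lemma Hh_one : Hh n p 1 = HhOne n p := by
  have h0 : Hh n p 0 = 1 := rfl
  ext i k
  rw [Hh_succ_apply, h0]
  simp [Matrix.one_apply, apply_ite Polynomial.derivative]

lemma eq_coeff (hα : (p n).eval α ≠ 0) (hn : 1 ≤ n) (i₀ : ℕ) (s : ℕ) :
    (((p n).eval α)^2)^s * ((s.factorial : K) * aseq n p α i₀ s)
      = ∑ j : Fin n, (Hh n p s ⟨0, hn⟩ j).eval α
          * (((j : ℕ).factorial : K) * aseq n p α i₀ (j : ℕ)) := by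
  have hgg : gg n p α ≠ 0 := hα
  have hcc : ∀ m : ℕ, PowerSeries.constantCoeff
      (PowerSeries.derivativeFun^[m] (PowerSeries.mk (aseq n p α i₀)))
      = (m.factorial : K) * aseq n p α i₀ m := by
    intro m
    rw [← PowerSeries.coeff_zero_eq_constantCoeff_apply, coeff_iter_deriv, PowerSeries.coeff_mk]
    rw [zero_add, Nat.descFactorial_self]
  have h := claim_eq n p α hgg hn i₀ s ⟨0, hn⟩
  have h2 := congrArg (PowerSeries.constantCoeff) h
  rw [map_mul, map_pow, map_sum, Phi_constantCoeff, Polynomial.eval_pow] at h2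
  rw [show s + ((⟨0, hn⟩ : Fin n) : ℕ) = s from rfl] at h2
  rw [hcc s] at h2
  rw [h2]
  refine Finset.sum_congr rfl (fun j _ => ?_)
  rw [map_mul, Phi_constantCoeff, hcc (j : ℕ)]

lemma comparison_one (T : Polynomial K) (H : ℕ → Matrix (Fin n) (Fin n) (Polynomial K))
    (hsup : ∀ i j : Fin n, (j : ℕ) = (i : ℕ) + 1 → H 1 i j = T)
    (hlastrow : ∀ i j : Fin n, (i : ℕ) = n - 1 → p n * H 1 i j = -(T * p (j : ℕ)))
    (hzero : ∀ i j : Fin n, (i : ℕ) ≠ n - 1 → (j : ℕ) ≠ (i : ℕ) + 1 → H 1 i j = 0)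
    (i j : Fin n) :
    T * HhOne n p i j = (p n)^2 * H 1 i j := by
  rw [HhOne]
  by_cases h1 : (j : ℕ) = (i : ℕ) + 1
  · rw [if_pos h1, hsup i j h1]; ring
  · rw [if_neg h1]
    by_cases h2 : (i : ℕ) = n - 1
    · rw [if_pos h2]
      linear_combination (-(p n)) * hlastrow i j h2
    · rw [if_neg h2, hzero i j h2 h1, mul_zero, mul_zero]

lemma comparison (T : Polynomial K) (H : ℕ → Matrix (Fin n) (Fin n) (Polynomial K))
    (hsup : ∀ i j : Fin n, (j : ℕ) = (i : ℕ) + 1 → H 1 i j = T)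
    (hlastrow : ∀ i j : Fin n, (i : ℕ) = n - 1 → p n * H 1 i j = -(T * p (j : ℕ)))
    (hzero : ∀ i j : Fin n, (i : ℕ) ≠ n - 1 → (j : ℕ) ≠ (i : ℕ) + 1 → H 1 i j = 0)
    (hHrec : ∀ s, 1 ≤ s → H (s + 1)
        = H s * H 1 + T • (H s).map Polynomial.derivative
          - ((s : Polynomial K) * Polynomial.derivative T) • H s) :
    ∀ s, 1 ≤ s → ∀ i j : Fin n, T^s * Hh n p s i j = ((p n)^2)^s * H s i j := by
  intro s hs
  induction s, hs using Nat.le_induction with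
  | base =>
      intro i j
      rw [pow_one, pow_one, Hh_one]
      exact comparison_one n p T H hsup hlastrow hzero i j
  | succ s hs ih =>
      intro i j
      have hentry : H (s+1) i j = (H s * H 1) i j + T * Polynomial.derivative (H s i j)
          - ((s : Polynomial K) * Polynomial.derivative T) * H s i j := by
        rw [hHrec s hs]
        rw [Matrix.sub_apply, Matrix.add_apply, Matrix.smul_apply, Matrix.smul_apply,
          Matrix.map_apply, smul_eq_mul, smul_eq_mul]
      rw [Hh_succ_apply, hentry]
      have hsum : T^(s+1) * ((Hh n p s * HhOne n p) i j)
          = ((p n)^2)^(s+1) * ((H s * H 1) i j) := by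
        rw [Matrix.mul_apply, Matrix.mul_apply, Finset.mul_sum, Finset.mul_sum]
        refine Finset.sum_congr rfl (fun k _ => ?_)
        linear_combination (T * HhOne n p k j) * ih i k
          + (((p n)^2)^s * H s i k) * comparison_one n p T H hsup hlastrow hzero k j
      have hd : Polynomial.derivative (T^s) * Hh n p s i j
            + T^s * Polynomial.derivative (Hh n p s i j)
          = Polynomial.derivative (((p n)^2)^s) * H s i j
            + ((p n)^2)^s * Polynomial.derivative (H s i j) := by
        have h0 : Polynomial.derivative (T^s * Hh n p s i j)
            = Polynomial.derivative (((p n)^2)^s * H s i j) := by rw [ih i j]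
        rw [Polynomial.derivative_mul, Polynomial.derivative_mul] at h0
        exact h0
      have hT' := poly_pow_deriv T s
      have hU' := poly_pow_deriv ((p n)^2) s
      linear_combination hsum + (T * (p n)^2) * hd - ((p n)^2 * Hh n p s i j) * hT'
        + (T * H s i j) * hU'
        - (((s : ℕ) : Polynomial K) * (T * Polynomial.derivative ((p n)^2)
            + (p n)^2 * Polynomial.derivative T)) * ih i j

lemma deg_bound (T : Polynomial K) (H : ℕ → Matrix (Fin n) (Fin n) (Polynomial K))
    (hHrec : ∀ s, 1 ≤ s → H (s + 1)
        = H s * H 1 + T • (H s).map Polynomial.derivative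
          - ((s : Polynomial K) * Polynomial.derivative T) • H s)
    (D : ℕ) (hD1 : ∀ i j, (H 1 i j).natDegree ≤ D) (hDT : T.natDegree ≤ D) :
    ∀ s, 1 ≤ s → ∀ i j, (H s i j).natDegree ≤ s * D := by
  intro s hs
  induction s, hs using Nat.le_induction with
  | base => intro i j; simpa using hD1 i j
  | succ s hs ih =>
      intro i j
      have hentry : H (s+1) i j = (H s * H 1) i j + T * Polynomial.derivative (H s i j)
          - ((s : Polynomial K) * Polynomial.derivative T) * H s i j := by
        rw [hHrec s hs]
        rw [Matrix.sub_apply, Matrix.add_apply, Matrix.smul_apply, Matrix.smul_apply,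
          Matrix.map_apply, smul_eq_mul, smul_eq_mul]
      rw [hentry]
      have hsD : (s+1) * D = s * D + D := by ring
      have h1 : ((H s * H 1) i j).natDegree ≤ (s+1) * D := by
        rw [Matrix.mul_apply]
        refine Polynomial.natDegree_sum_le_of_forall_le _ _ (fun k _ => ?_)
        refine le_trans Polynomial.natDegree_mul_le ?_
        have := ih i k
        have := hD1 k j
        omega
      have h2 : (T * Polynomial.derivative (H s i j)).natDegree ≤ (s+1) * D := by
        refine le_trans Polynomial.natDegree_mul_le ?_
        have h3 := Polynomial.natDegree_derivative_le (H s i j)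
        have := ih i j
        omega
      have h3 : (((s : Polynomial K) * Polynomial.derivative T) * H s i j).natDegree
          ≤ (s+1) * D := by
        refine le_trans Polynomial.natDegree_mul_le ?_
        have h4 : ((s : Polynomial K) * Polynomial.derivative T).natDegree ≤ D := by
          refine le_trans Polynomial.natDegree_mul_le ?_
          have h5 := Polynomial.natDegree_derivative_le T
          rw [Polynomial.natDegree_natCast]
          omega
        have := ih i j
        omega
      refine le_trans (Polynomial.natDegree_sub_le _ _) ?_
      rw [max_le_iff]
      exact ⟨le_trans (Polynomial.natDegree_add_le _ _) (by rw [max_le_iff]; exact ⟨h1, h2⟩), h3⟩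

lemma size_bound (hα : (p n).eval α ≠ 0) (hn : 1 ≤ n) (i₀ : ℕ) :
    ∃ C : ℝ, 1 ≤ C ∧ ∀ s : ℕ, ∀ σ : K →+* ℂ, ‖σ (aseq n p α i₀ s)‖ ≤ C ^ s := by
  classical
  have hgg : gg n p α ≠ 0 := hα
  set LP := (range (n+1)).sup (fun k => (Pp p α k).natDegree) with hLP
  have hBex : ∀ kl : ℕ × ℕ, ∃ B : ℝ, ∀ σ : K →+* ℂ, ‖σ ((Pp p α kl.1).coeff kl.2)‖ ≤ B :=
    fun kl => exists_bound _
  choose B hB using hBex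
  obtain ⟨bg, hbg⟩ := exists_bound ((gg n p α)⁻¹)
  have hB0 : ∀ kl, 0 ≤ B kl := fun kl => le_trans (norm_nonneg _) (hB kl K.subtype)
  have hbg0 : 0 ≤ bg := le_trans (norm_nonneg _) (hbg K.subtype)
  set Bc := ∑ k ∈ range (n+1), ∑ l ∈ range (LP+1), B (k, l) with hBc
  have hBc0 : 0 ≤ Bc := Finset.sum_nonneg fun k _ => Finset.sum_nonneg fun l _ => hB0 _
  refine ⟨max 1 (bg * Bc), le_max_left _ _, ?_⟩
  set C := max 1 (bg * Bc) with hC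
  have hC1 : (1:ℝ) ≤ C := le_max_left _ _
  have hC0 : (0:ℝ) ≤ C := by linarith
  intro s
  induction s using Nat.strong_induction_on with
  | _ s ih =>
    intro σ
    by_cases hs : s < n
    · rw [aseq_lt n p α i₀ s hs]
      by_cases h : s = i₀
      · rw [if_pos h, map_one, norm_one]
        exact one_le_pow₀ hC1
      · rw [if_neg h, map_zero, norm_zero]
        positivity
    · obtain ⟨m, rfl⟩ : ∃ m, s = n + m := ⟨s - n, by omega⟩
      rw [aseq_rec, phi]
      rw [map_mul, map_neg, map_inv₀, map_mul, map_natCast]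
      rw [norm_mul, norm_neg, norm_inv, norm_mul, Complex.norm_natCast]
      set dsc := (m+n).descFactorial n with hdsc
      have hdpos : 0 < dsc := Nat.pos_of_ne_zero (fun h => by
        rw [hdsc, Nat.descFactorial_eq_zero_iff_lt] at h; omega)
      have hdR : (0:ℝ) < (dsc : ℝ) := by exact_mod_cast hdpos
      -- bound on the sum
      have key : ∀ k ∈ range (n+1), ∑ l ∈ range (m+1),
          ‖σ (if k = n ∧ l = 0 then 0
            else (Pp p α k).coeff l * (((m - l + k).descFactorial k : ℕ) : K)
              * aseq n p α i₀ (m - l + k))‖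
          ≤ (∑ l ∈ range (LP+1), B (k, l)) * ((dsc:ℝ) * C^(n+m-1)) := by
        intro k hk
        have hkn : k ≤ n := by simpa [Nat.lt_succ_iff] using hk
        have hterm : ∀ l ∈ range (m+1), ‖σ (if k = n ∧ l = 0 then 0
            else (Pp p α k).coeff l * (((m - l + k).descFactorial k : ℕ) : K)
              * aseq n p α i₀ (m - l + k))‖
            ≤ (if l < LP+1 then B (k, l) else 0) * ((dsc:ℝ) * C^(n+m-1)) := by
          intro l hl
          have hlm : l ≤ m := by simpa [Nat.lt_succ_iff] using hl
          have hb0 : (0:ℝ) ≤ (if l < LP+1 then B (k, l) else 0) := by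
            split
            · exact hB0 _
            · exact le_refl _
          by_cases hc : k = n ∧ l = 0
          · rw [if_pos hc, map_zero, norm_zero]
            have : (0:ℝ) ≤ (dsc:ℝ) * C^(n+m-1) := by positivity
            exact mul_nonneg hb0 this
          · rw [if_neg hc, map_mul, map_mul, map_natCast, norm_mul, norm_mul,
              Complex.norm_natCast]
            have hj : m - l + k < n + m := by
              rcases Nat.eq_or_lt_of_le hkn with h1 | h1
              · have : l ≠ 0 := fun h0 => hc ⟨h1, h0⟩
                omega
              · omega
            have h1 : ‖σ ((Pp p α k).coeff l)‖ ≤ (if l < LP+1 then B (k, l) else 0) := by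
              by_cases hlLP : l < LP + 1
              · rw [if_pos hlLP]; exact hB (k, l) σ
              · rw [if_neg hlLP]
                have hdeg : (Pp p α k).natDegree ≤ LP := Finset.le_sup (f := fun k => (Pp p α k).natDegree) hk
                rw [Polynomial.coeff_eq_zero_of_natDegree_lt (by omega), map_zero, norm_zero]
            have h2 : (((m - l + k).descFactorial k : ℕ) : ℝ) ≤ (dsc:ℝ) := by
              exact_mod_cast desc_le_desc (show m - l ≤ m by omega) hkn
            have h3 : ‖σ (aseq n p α i₀ (m - l + k))‖ ≤ C^(n+m-1) :=
              le_trans (ih (m - l + k) hj σ) (pow_le_pow_right₀ hC1 (by omega))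
            have step := mul_le_mul (mul_le_mul h1 h2 (by positivity) hb0) h3
              (norm_nonneg _) (mul_nonneg hb0 (le_of_lt hdR))
            refine le_trans step (le_of_eq (by ring))
        calc ∑ l ∈ range (m+1), ‖σ (if k = n ∧ l = 0 then 0
              else (Pp p α k).coeff l * (((m - l + k).descFactorial k : ℕ) : K)
                * aseq n p α i₀ (m - l + k))‖
            ≤ ∑ l ∈ range (m+1), (if l < LP+1 then B (k, l) else 0) * ((dsc:ℝ) * C^(n+m-1)) :=
              Finset.sum_le_sum hterm
          _ = (∑ l ∈ range (m+1), (if l < LP+1 then B (k, l) else 0)) * ((dsc:ℝ) * C^(n+m-1)) :=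
              (Finset.sum_mul _ _ _).symm
          _ ≤ (∑ l ∈ range (LP+1), B (k, l)) * ((dsc:ℝ) * C^(n+m-1)) := by
              refine mul_le_mul_of_nonneg_right ?_ (by positivity)
              rcases le_total (m+1) (LP+1) with hcase | hcase
              · calc ∑ l ∈ range (m+1), (if l < LP+1 then B (k, l) else 0)
                    ≤ ∑ l ∈ range (m+1), B (k, l) := by
                      refine Finset.sum_le_sum (fun l _ => ?_)
                      split
                      · exact le_refl _
                      · exact hB0 _
                  _ ≤ ∑ l ∈ range (LP+1), B (k, l) :=
                      Finset.sum_le_sum_of_subset_of_nonneg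
                        (Finset.range_subset_range.mpr hcase) (fun l _ _ => hB0 _)
              · have heq : ∑ l ∈ range (m+1), (if l < LP+1 then B (k, l) else 0)
                    = ∑ l ∈ range (LP+1), (if l < LP+1 then B (k, l) else 0) :=
                  (Finset.sum_subset (Finset.range_subset_range.mpr hcase)
                    (fun l _ hnl => by
                      rw [if_neg (by simpa [Nat.lt_succ_iff] using hnl)])).symm
                rw [heq]
                refine Finset.sum_le_sum (fun l _ => ?_)
                split
                · exact le_refl _
                · exact hB0 _
      have hSb : ‖σ (∑ k ∈ range (n+1), ∑ l ∈ range (m+1),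
          (if k = n ∧ l = 0 then 0
            else (Pp p α k).coeff l * (((m - l + k).descFactorial k : ℕ) : K)
              * aseq n p α i₀ (m - l + k)))‖ ≤ Bc * ((dsc:ℝ) * C^(n+m-1)) := by
        rw [map_sum]
        refine le_trans (norm_sum_le _ _) ?_
        have : ∀ k ∈ range (n+1), ‖σ (∑ l ∈ range (m+1),
            (if k = n ∧ l = 0 then 0
              else (Pp p α k).coeff l * (((m - l + k).descFactorial k : ℕ) : K)
                * aseq n p α i₀ (m - l + k)))‖
            ≤ (∑ l ∈ range (LP+1), B (k, l)) * ((dsc:ℝ) * C^(n+m-1)) := by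
          intro k hk
          rw [map_sum]
          exact le_trans (norm_sum_le _ _) (key k hk)
        refine le_trans (Finset.sum_le_sum this) ?_
        rw [← Finset.sum_mul]
      have hgb : (‖σ (gg n p α)‖ * (dsc:ℝ))⁻¹ ≤ bg * (dsc:ℝ)⁻¹ := by
        rw [mul_inv]
        refine mul_le_mul_of_nonneg_right ?_ (by positivity)
        rw [← norm_inv, ← map_inv₀]
        exact hbg σ
      have hfin := mul_le_mul hgb hSb (norm_nonneg _)
        (mul_nonneg hbg0 (by positivity))
      refine le_trans hfin ?_
      have heq : (bg * (dsc:ℝ)⁻¹) * (Bc * ((dsc:ℝ) * C^(n+m-1)))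
          = (bg * Bc) * C^(n+m-1) := by
        field_simp
      rw [heq]
      calc (bg * Bc) * C^(n+m-1) ≤ C * C^(n+m-1) :=
            mul_le_mul_of_nonneg_right (le_max_right 1 _) (by positivity)
        _ = C^(n+m) := by
            have h9 : C^(n+m) = C^((n+m-1)+1) := by congr 1; omega
            rw [h9, pow_succ]
            ring

lemma coeff_zero_pow (u : Polynomial K) (m : ℕ) : (u^m).coeff 0 = (u.coeff 0)^m := by
  induction m with
  | zero => simp
  | succ m ih => rw [pow_succ, Polynomial.mul_coeff_zero, ih, pow_succ]

lemma den_main (hα : (p n).eval α ≠ 0) (hn : 1 ≤ n) (i₀ : ℕ)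
    (T : Polynomial K) (hT : T ≠ 0) (H : ℕ → Matrix (Fin n) (Fin n) (Polynomial K))
    (hsup : ∀ i j : Fin n, (j : ℕ) = (i : ℕ) + 1 → H 1 i j = T)
    (hlastrow : ∀ i j : Fin n, (i : ℕ) = n - 1 → p n * H 1 i j = -(T * p (j : ℕ)))
    (hzero : ∀ i j : Fin n, (i : ℕ) ≠ n - 1 → (j : ℕ) ≠ (i : ℕ) + 1 → H 1 i j = 0)
    (hHrec : ∀ s, 1 ≤ s → H (s + 1)
        = H s * H 1 + T • (H s).map Polynomial.derivative
          - ((s : Polynomial K) * Polynomial.derivative T) • H s)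
    (D : ℕ) (hD1 : ∀ i j, (H 1 i j).natDegree ≤ D) (hDT : T.natDegree ≤ D)
    (e : ℕ) (he : IsIntegral ℤ ((e : K) * α))
    (cp : ℕ) (hcp : ∀ k, IsIntegral ℤ ((cp : K) * (Pp p α n).coeff k))
    (W : Polynomial K) (v : ℕ) (hW : T = (Polynomial.X - Polynomial.C α)^v * W)
    (hWα : W.eval α ≠ 0)
    (cw : ℕ) (hcw : IsIntegral ℤ ((cw : K) * (W.eval α)⁻¹))
    (cg : ℕ) (hcg : IsIntegral ℤ ((cg : K) * (((p n).eval α)^2)⁻¹))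
    (m : ℕ) (hm : 1 ≤ m) (q : ℕ)
    (hq : ∀ i j k, IsIntegral ℤ (((q : K) / (m.factorial : K)) * ((H m i j).coeff k))) :
    IsIntegral ℤ ((q : K) * ((cg : K)^m * (cw : K)^m * (cp : K)^(2*m) * (e : K)^(m*D))
      * aseq n p α i₀ m) := by
  classical
  have hgg : gg n p α ≠ 0 := hα
  -- step 1 : the polynomial identity, composed with X + C α, coefficient v*m
  simp only [Pp] at hcp
  have h78 : ∀ j : Fin n, (W.eval α)^m * (Hh n p m ⟨0, hn⟩ j).eval α
      = ∑ l ∈ range (v*m+1), (((p n).comp (Polynomial.X + Polynomial.C α))^(2*m)).coeff l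
          * ((H m ⟨0, hn⟩ j).comp (Polynomial.X + Polynomial.C α)).coeff (v*m - l) := by
    intro j
    have h1 := comparison n p T H hsup hlastrow hzero hHrec m hm ⟨0, hn⟩ j
    have h2 := congrArg (fun u : Polynomial K =>
      u.comp (Polynomial.X + Polynomial.C α)) h1
    simp only [Polynomial.mul_comp, Polynomial.pow_comp] at h2
    rw [hW] at h2
    simp only [Polynomial.mul_comp, Polynomial.pow_comp, Polynomial.sub_comp,
      Polynomial.X_comp, Polynomial.C_comp, add_sub_cancel_right] at h2
    -- h2 : (X^v * Wt)^m * Hht = ((ptn)^2)^m * Ht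
    have h3 : (Polynomial.X : Polynomial K)^(v*m)
        * ((W.comp (Polynomial.X + Polynomial.C α))^m
          * ((Hh n p m ⟨0, hn⟩ j).comp (Polynomial.X + Polynomial.C α)))
        = (((p n).comp (Polynomial.X + Polynomial.C α))^(2*m))
          * ((H m ⟨0, hn⟩ j).comp (Polynomial.X + Polynomial.C α)) := by
      rw [pow_mul ((p n).comp (Polynomial.X + Polynomial.C α)) 2 m, ← h2, mul_pow, ← pow_mul]
      ring
    have h4 := congrArg (fun u : Polynomial K => u.coeff (0 + v*m)) h3
    rw [Polynomial.coeff_X_pow_mul] at h4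
    rw [zero_add] at h4
    rw [Polynomial.mul_coeff_zero, coeff_zero_pow] at h4
    have h5 : (W.comp (Polynomial.X + Polynomial.C α)).coeff 0 = W.eval α := by
      rw [← Polynomial.taylor_apply, Polynomial.taylor_coeff_zero]
    have h6 : ((Hh n p m ⟨0, hn⟩ j).comp (Polynomial.X + Polynomial.C α)).coeff 0
        = (Hh n p m ⟨0, hn⟩ j).eval α := by
      rw [← Polynomial.taylor_apply, Polynomial.taylor_coeff_zero]
    rw [h5, h6] at h4
    rw [h4, coeff_mul_range]
  -- step 2 : integrality of the Hh evaluations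
  have Jm : ∀ j : Fin n, IsIntegral ℤ (((q : K) / (m.factorial : K))
      * ((cw : K)^m * (cp : K)^(2*m) * (e : K)^(m*D)) * (Hh n p m ⟨0, hn⟩ j).eval α) := by
    intro j
    have hq' : ∀ k, IsIntegral ℤ (((q : K) / (m.factorial : K)) * ((H m ⟨0, hn⟩ j).coeff k)) :=
      fun k => hq ⟨0, hn⟩ j k
    have hL : (H m ⟨0, hn⟩ j).natDegree ≤ m * D :=
      deg_bound n T H hHrec D hD1 hDT m hm ⟨0, hn⟩ j
    have hsum_int : IsIntegral ℤ ((cp : K)^(2*m) * (((q : K) / (m.factorial : K))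
        * (e : K)^(m*D)) * ((W.eval α)^m * (Hh n p m ⟨0, hn⟩ j).eval α)) := by
      rw [h78 j, Finset.mul_sum]
      refine IsIntegral.sum _ (fun l _ => ?_)
      have ht := (int_coeff_pow hcp (2*m) l).mul
        (int_coeff_taylor he hq' hL (v*m - l))
      have heq : (cp : K)^(2*m) * (((q : K) / (m.factorial : K)) * (e : K)^(m*D))
          * ((((p n).comp (Polynomial.X + Polynomial.C α))^(2*m)).coeff l
            * ((H m ⟨0, hn⟩ j).comp (Polynomial.X + Polynomial.C α)).coeff (v*m - l))
          = ((cp : K)^(2*m) * ((((p n).comp (Polynomial.X + Polynomial.C α))^(2*m)).coeff l))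
            * ((q : K) / (m.factorial : K) * (e : K)^(m*D)
              * ((H m ⟨0, hn⟩ j).comp (Polynomial.X + Polynomial.C α)).coeff (v*m - l)) := by
        ring
      rw [heq]
      exact ht
    have hcwW : IsIntegral ℤ (((cw : K) * (W.eval α)⁻¹)^m) := hcw.pow m
    have heq2 : ((q : K) / (m.factorial : K))
        * ((cw : K)^m * (cp : K)^(2*m) * (e : K)^(m*D)) * (Hh n p m ⟨0, hn⟩ j).eval α
        = ((cw : K) * (W.eval α)⁻¹)^m * ((cp : K)^(2*m) * (((q : K) / (m.factorial : K))
          * (e : K)^(m*D)) * ((W.eval α)^m * (Hh n p m ⟨0, hn⟩ j).eval α)) := by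
      rw [mul_pow, inv_pow]
      have hWm : (W.eval α)^m ≠ 0 := pow_ne_zero m hWα
      field_simp
    rw [heq2]
    exact hcwW.mul hsum_int
  -- step 3 : solve for aseq m using eq_coeff
  have E := eq_coeff n p α hα hn i₀ m
  have hw : ∀ j : Fin n, IsIntegral ℤ ((((j : ℕ).factorial : ℕ) : K) * aseq n p α i₀ (j : ℕ)) := by
    intro j
    rw [aseq_lt n p α i₀ (j : ℕ) j.isLt]
    by_cases h : (j : ℕ) = i₀
    · rw [if_pos h, mul_one]; exact isIntegral_natCast _
    · rw [if_neg h, mul_zero]; exact isIntegral_zero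
  have hX : (q : K) * ((cg : K)^m * (cw : K)^m * (cp : K)^(2*m) * (e : K)^(m*D))
      * aseq n p α i₀ m
      = ∑ j : Fin n, ((cg : K) * (((p n).eval α)^2)⁻¹)^m
        * (((q : K) / (m.factorial : K)) * ((cw : K)^m * (cp : K)^(2*m) * (e : K)^(m*D))
          * (Hh n p m ⟨0, hn⟩ j).eval α)
        * ((((j : ℕ).factorial : ℕ) : K) * aseq n p α i₀ (j : ℕ)) := by
    have hc1 : ∀ j : Fin n, ((cg : K) * (((p n).eval α)^2)⁻¹)^m
        * (((q : K) / (m.factorial : K)) * ((cw : K)^m * (cp : K)^(2*m) * (e : K)^(m*D))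
          * (Hh n p m ⟨0, hn⟩ j).eval α)
        * ((((j : ℕ).factorial : ℕ) : K) * aseq n p α i₀ (j : ℕ))
        = (((cg : K) * (((p n).eval α)^2)⁻¹)^m * ((q : K) / (m.factorial : K))
            * ((cw : K)^m * (cp : K)^(2*m) * (e : K)^(m*D)))
          * ((Hh n p m ⟨0, hn⟩ j).eval α
            * ((((j : ℕ).factorial : ℕ) : K) * aseq n p α i₀ (j : ℕ))) := by
      intro j; ring
    rw [Finset.sum_congr rfl (fun j _ => hc1 j), ← Finset.mul_sum, ← E]
    have hg2 : (((p n).eval α)^2) ≠ 0 := pow_ne_zero _ hα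
    have hfac : ((m.factorial : ℕ) : K) ≠ 0 := by
      exact_mod_cast (Nat.cast_ne_zero (R := K)).mpr (Nat.factorial_pos m).ne'
    field_simp
    rw [mul_assoc _ ((↑cg / eval α (p n) ^ 2) ^ m), ← mul_pow, div_mul_cancel₀ _ hg2]
    ring
  rw [hX]
  refine IsIntegral.sum _ (fun j _ => ?_)
  exact ((hcg.pow m).mul (Jm j)).mul (hw j)

lemma den_bound (hα : (p n).eval α ≠ 0) (hn : 1 ≤ n) (i₀ : ℕ)
    (T : Polynomial K) (hT : T ≠ 0) (H : ℕ → Matrix (Fin n) (Fin n) (Polynomial K))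
    (hsup : ∀ i j : Fin n, (j : ℕ) = (i : ℕ) + 1 → H 1 i j = T)
    (hlastrow : ∀ i j : Fin n, (i : ℕ) = n - 1 → p n * H 1 i j = -(T * p (j : ℕ)))
    (hzero : ∀ i j : Fin n, (i : ℕ) ≠ n - 1 → (j : ℕ) ≠ (i : ℕ) + 1 → H 1 i j = 0)
    (hHrec : ∀ s, 1 ≤ s → H (s + 1)
        = H s * H 1 + T • (H s).map Polynomial.derivative
          - ((s : Polynomial K) * Polynomial.derivative T) • H s)
    (hGal : ∀ ε : ℝ, 0 < ε → ∃ s₀ : ℕ, ∀ s ≥ s₀, ∃ q : ℕ, 0 < q ∧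
        (q : ℝ) ≤ (s.factorial : ℝ) ^ ε ∧
        ∀ m, 1 ≤ m → m ≤ s → ∀ i j k, IsIntegral ℤ
          (((q : K) / (m.factorial : K)) * ((H m i j).coeff k))) :
    ∀ ε : ℝ, 0 < ε → ∃ N : ℕ, ∀ k ≥ N, ∃ d : ℕ, 0 < d ∧ (d : ℝ) ≤ (k.factorial : ℝ) ^ ε ∧
      ∀ s ≤ k, IsIntegral ℤ ((d : K) * aseq n p α i₀ s) := by
  classical
  obtain ⟨e, he0, he⟩ := exists_den (K := K) α
  obtain ⟨cp, hcp0, hcp⟩ := exists_den_poly (Pp p α n)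
  set v := Polynomial.rootMultiplicity α T with hv
  obtain ⟨W, hW⟩ := Polynomial.pow_rootMultiplicity_dvd T α
  have hWα : W.eval α ≠ 0 := by
    intro h0
    have h1 : (Polynomial.X - Polynomial.C α) ∣ W := Polynomial.dvd_iff_isRoot.mpr h0
    obtain ⟨W2, hW2⟩ := h1
    have h3 : (Polynomial.X - Polynomial.C α)^(v+1) ∣ T := ⟨W2, by rw [hW, hW2]; ring⟩
    exact Polynomial.pow_rootMultiplicity_not_dvd hT α h3
  obtain ⟨cw, hcw0, hcw⟩ := exists_den (K := K) ((W.eval α)⁻¹)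
  obtain ⟨cg, hcg0, hcg⟩ := exists_den (K := K) ((((p n).eval α)^2)⁻¹)
  set B1 := Finset.univ.sup (fun ij : Fin n × Fin n => (H 1 ij.1 ij.2).natDegree) with hB1
  set D := T.natDegree + B1 with hD
  have hD1 : ∀ i j : Fin n, (H 1 i j).natDegree ≤ D := by
    intro i j
    have h4 : (H 1 i j).natDegree ≤ B1 :=
      Finset.le_sup (f := fun ij : Fin n × Fin n => (H 1 ij.1 ij.2).natDegree)
        (Finset.mem_univ (i, j))
    omega
  have hDT : T.natDegree ≤ D := by omega
  set A : ℕ := cg * cw * cp^2 * e^D with hA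
  have hA0 : 0 < A := by
    have := Nat.mul_pos (Nat.mul_pos (Nat.mul_pos hcg0 hcw0) (pow_pos hcp0 2)) (pow_pos he0 D)
    simpa [hA] using this
  have hA1 : 1 ≤ A := hA0
  intro ε hε
  obtain ⟨s₀, hs₀⟩ := hGal (ε/2) (by linarith)
  obtain ⟨N2, hN2⟩ := pow_le_factorial_rpow (C := (A:ℝ)) (by exact_mod_cast hA1)
    (show (0:ℝ) < ε/2 by linarith)
  refine ⟨max s₀ N2, fun k hk => ?_⟩
  obtain ⟨q, hq0, hqle, hqint⟩ := hs₀ k (le_trans (le_max_left _ _) hk)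
  refine ⟨q * A^k, by positivity, ?_, ?_⟩
  · push_cast
    calc (q:ℝ) * (A:ℝ)^k ≤ (k.factorial : ℝ)^(ε/2) * (k.factorial : ℝ)^(ε/2) :=
        mul_le_mul hqle (hN2 k (le_trans (le_max_right _ _) hk)) (by positivity) (by positivity)
      _ = (k.factorial : ℝ)^ε := by
        rw [← Real.rpow_add (show (0:ℝ) < (k.factorial:ℝ) by exact_mod_cast Nat.factorial_pos k)]
        norm_num
  · intro s hs
    by_cases hs1 : 1 ≤ s
    · have hmain := den_main n p α hα hn i₀ T hT H hsup hlastrow hzero hHrec D hD1 hDT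
        e he cp hcp W v hW hWα cw hcw cg hcg s hs1 q (hqint s hs1 hs)
      obtain ⟨t, rfl⟩ : ∃ t, k = t + s := ⟨k - s, by omega⟩
      have hcast : ((q * A^(t+s) : ℕ) : K) * aseq n p α i₀ s
          = ((A^t : ℕ) : K) * ((q : K) * ((cg : K)^s * (cw : K)^s * (cp : K)^(2*s)
              * (e : K)^(s*D)) * aseq n p α i₀ s) := by
        rw [hA]
        push_cast
        ring
      rw [hcast]
      exact (isIntegral_natCast _).mul hmain
    · have hs0 : s = 0 := by omega
      rw [hs0, aseq_lt n p α i₀ 0 (by omega)]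
      by_cases h : 0 = i₀
      · rw [if_pos h, mul_one]; exact isIntegral_natCast _
      · rw [if_neg h, mul_zero]; exact isIntegral_zero

end Mat

end GAux

/-- Proposition 9: at an ordinary point `α`, a G-operator in the large sense
has a full basis of solutions which are G-functions in the large sense. -/
theorem GOperatorLarge_basis_of_solutions_at_ordinary_point
    (K : Subfield ℂ) [FiniteDimensional ℚ K]
    (n : ℕ) (hn : 1 ≤ n) (p : ℕ → Polynomial K) (hpn : p n ≠ 0)
    (T : Polynomial K) (hT : T ≠ 0) (hTint : ∀ k, IsIntegral ℤ (T.coeff k))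
    (H : ℕ → Matrix (Fin n) (Fin n) (Polynomial K))
    -- H 1 = T · (companion matrix of L = ∑ p_k (d/dz)^k) :
    (hsup : ∀ i j : Fin n, (j : ℕ) = (i : ℕ) + 1 → H 1 i j = T)
    (hlastrow : ∀ i j : Fin n, (i : ℕ) = n - 1 →
        p n * H 1 i j = -(T * p (j : ℕ)))
    (hzero : ∀ i j : Fin n, (i : ℕ) ≠ n - 1 → (j : ℕ) ≠ (i : ℕ) + 1 → H 1 i j = 0)
    (hH1int : ∀ i j k, IsIntegral ℤ ((H 1 i j).coeff k))
    (hHrec : ∀ s, 1 ≤ s → H (s + 1)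
        = H s * H 1 + T • (H s).map Polynomial.derivative
          - ((s : Polynomial K) * Polynomial.derivative T) • H s)
    -- Galochkin condition in the large sense :
    (hGal : ∀ ε : ℝ, 0 < ε → ∃ s₀ : ℕ, ∀ s ≥ s₀, ∃ q : ℕ, 0 < q ∧
        (q : ℝ) ≤ (s.factorial : ℝ) ^ ε ∧
        ∀ m, 1 ≤ m → m ≤ s → ∀ i j k, IsIntegral ℤ
          (((q : K) / (m.factorial : K)) * ((H m i j).coeff k)))
    -- α is an ordinary point of L :
    (α : K) (hα : (p n).eval α ≠ 0) :
    ∃ f : Fin n → PowerSeries K, LinearIndependent K f ∧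
      ∀ i, IsGFunctionLarge K (f i) ∧
        ∑ k ∈ Finset.range (n + 1),
          (((p k).comp (Polynomial.X + Polynomial.C α) : Polynomial K) : PowerSeries K)
            * (PowerSeries.derivativeFun^[k] (f i)) = 0 := by
  classical
  have hgg : GAux.gg n p α ≠ 0 := hα
  refine ⟨fun i => PowerSeries.mk (GAux.aseq n p α (i : ℕ)), ?_, fun i => ?_⟩
  · rw [Fintype.linearIndependent_iff]
    intro g hg i
    have h := congrArg (PowerSeries.coeff (i : ℕ)) hg
    rw [map_sum, map_zero] at h
    have h2 : ∀ j : Fin n, PowerSeries.coeff (i:ℕ)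
        (g j • PowerSeries.mk (GAux.aseq n p α (j : ℕ)))
        = g j * (if (i:ℕ) = (j:ℕ) then 1 else 0) := by
      intro j
      rw [LinearMap.map_smul, smul_eq_mul, PowerSeries.coeff_mk,
        GAux.aseq_lt n p α (j:ℕ) (i:ℕ) i.isLt]
    rw [Finset.sum_congr rfl (fun j _ => h2 j)] at h
    rw [Finset.sum_eq_single i
      (fun j _ hj => by rw [if_neg (fun hh => hj (Fin.ext hh.symm)), mul_zero])
      (fun hnot => absurd (Finset.mem_univ i) hnot), if_pos rfl, mul_one] at h
    exact h
  · have hode : ∑ k ∈ Finset.range (n + 1),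
        (((p k).comp (Polynomial.X + Polynomial.C α) : Polynomial K) : PowerSeries K)
          * (PowerSeries.derivativeFun^[k] (PowerSeries.mk (GAux.aseq n p α (i : ℕ)))) = 0 := by
      have h := GAux.ode_holds n p α hgg (i : ℕ)
      simpa only [GAux.Phi_apply] using h
    refine ⟨⟨⟨n, fun k => (p k).comp (Polynomial.X + Polynomial.C α), ⟨n, le_refl n, ?_⟩,
      hode⟩, ?_, ?_⟩, hode⟩
    · -- (p n).comp (X + C α) ≠ 0
      intro h0
      apply hα
      have h0' : (p n).comp (Polynomial.X + Polynomial.C α) = 0 := h0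
      have h1 : ((p n).comp (Polynomial.X + Polynomial.C α)).coeff 0 = (p n).eval α := by
        rw [← Polynomial.taylor_apply, Polynomial.taylor_coeff_zero]
      rw [h0', Polynomial.coeff_zero] at h1
      exact h1.symm
    · -- size condition
      obtain ⟨C, hC1, hC⟩ := GAux.size_bound n p α hα hn (i : ℕ)
      intro ε hε
      obtain ⟨N, hN⟩ := GAux.pow_le_factorial_rpow hC1 hε
      refine ⟨N, fun k hk σ => ?_⟩
      rw [PowerSeries.coeff_mk]
      exact le_trans (hC k σ) (hN k hk)
    · -- denominator condition
      intro ε hε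
      obtain ⟨N, hN⟩ := GAux.den_bound n p α hα hn (i:ℕ) T hT H hsup hlastrow hzero hHrec
        hGal ε hε
      refine ⟨N, fun k hk => ?_⟩
      obtain ⟨d, hd0, hdle, hdint⟩ := hN k hk
      refine ⟨d, hd0, hdle, fun j hj => ?_⟩
      rw [PowerSeries.coeff_mk]
      exact hdint j hj
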